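/- For all n ≥ 4, F_n = F(A_{n+1}, f_n), i.e., the set of length-f_n factors appearing in any A_m (for any m) equals the set of length-f_n factors of words in A_{n+1}. -/
import Mathlib


/-- Sets of inflated random Fibonacci words: A₁ = {0}, A₂ = {1},
    Aₙ = Aₙ₋₁Aₙ₋₂ ∪ Aₙ₋₂Aₙ₋₁ for n ≥ 3 (A₀ = ∅). -/
def wordSet : ℕ → Set (List Bool)
  | 0 => ∅
  | 1 => {[false]}
  | 2 => {[true]}
  | (n + 3) => Set.image2 (· ++ ·) (wordSet (n + 2)) (wordSet (n + 1)) ∪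
      Set.image2 (· ++ ·) (wordSet (n + 1)) (wordSet (n + 2))

/-- Concatenation of sets of words: UV = {uv : u ∈ U, v ∈ V}. -/
def cat (U V : Set (List Bool)) : Set (List Bool) := Set.image2 (· ++ ·) U V

/-- W[a,b]: the set of segments wₐ…w_b (1-based indexing) of words in W. -/
def seg (W : Set (List Bool)) (a b : ℕ) : Set (List Bool) :=
  (fun w => (w.drop (a - 1)).take (b - a + 1)) '' W

/-- F(S, m): the set of all contiguous factors of length m of words in S. -/
def factorSet (S : Set (List Bool)) (m : ℕ) : Set (List Bool) :=
  {x | x.length = m ∧ ∃ w ∈ S, x <:+: w}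

/-- Fₙ: the set of factors of length fₙ occurring in any inflated word. -/
def Fn (n : ℕ) : Set (List Bool) := ⋃ m ≥ 1, factorSet (wordSet m) (Nat.fib n)

lemma append_mem_left {k : ℕ} {u v : List Bool} (hu : u ∈ wordSet (k+2))
    (hv : v ∈ wordSet (k+1)) : u ++ v ∈ wordSet (k+3) := by
  simp only [wordSet]
  exact Set.mem_union_left _ (Set.mem_image2_of_mem hu hv)

lemma append_mem_right {k : ℕ} {u v : List Bool} (hu : u ∈ wordSet (k+1))
    (hv : v ∈ wordSet (k+2)) : u ++ v ∈ wordSet (k+3) := by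
  simp only [wordSet]
  exact Set.mem_union_right _ (Set.mem_image2_of_mem hu hv)

lemma nat_cases3 (m : ℕ) : m = 0 ∨ m = 1 ∨ m = 2 ∨ ∃ m', m = m' + 3 := by
  rcases le_or_gt m 2 with h | h
  · interval_cases m <;> simp
  · exact Or.inr (Or.inr (Or.inr ⟨m - 3, by omega⟩))

lemma wordSet_length : ∀ m, ∀ w ∈ wordSet m, w.length = Nat.fib m := by
  intro m
  induction m using Nat.strong_induction_on with
  | _ m ih =>
    rcases nat_cases3 m with rfl | rfl | rfl | ⟨m, rfl⟩
    · intro w hw; exact absurd hw (Set.notMem_empty w)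
    · intro w hw; simp only [wordSet, Set.mem_singleton_iff] at hw; subst hw; simp
    · intro w hw; simp only [wordSet, Set.mem_singleton_iff] at hw; subst hw; simp
    · intro w hw
      rw [wordSet] at hw
      have hfib : Nat.fib (m+3) = Nat.fib (m+1) + Nat.fib (m+2) := Nat.fib_add_two
      rcases hw with h | h <;> obtain ⟨u, hu, v, hv, rfl⟩ := h
      · rw [List.length_append, ih (m+2) (by omega) u hu, ih (m+1) (by omega) v hv]
        omega
      · rw [List.length_append, ih (m+1) (by omega) u hu, ih (m+2) (by omega) v hv]
        omega

lemma wordSet_nonempty : ∀ m, 1 ≤ m → (wordSet m).Nonempty := by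
  intro m
  induction m using Nat.strong_induction_on with
  | _ m ih =>
    rcases nat_cases3 m with rfl | rfl | rfl | ⟨m, rfl⟩
    · intro h; omega
    · intro _; exact ⟨[false], rfl⟩
    · intro _; exact ⟨[true], rfl⟩
    · intro _
      obtain ⟨u, hu⟩ := ih (m+2) (by omega) (by omega)
      obtain ⟨v, hv⟩ := ih (m+1) (by omega) (by omega)
      exact ⟨u ++ v, append_mem_left hu hv⟩

lemma suffix_split {α : Type*} {s u v : List α} (h : s <:+ u ++ v) :
    s <:+ v ∨ ∃ s', s' <:+ u ∧ s = s' ++ v := by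
  obtain ⟨a, ha⟩ := h
  rcases List.append_eq_append_iff.mp ha with ⟨a', h1, h2⟩ | ⟨c', h1, h2⟩
  · exact Or.inr ⟨a', ⟨a, h1.symm⟩, h2⟩
  · exact Or.inl ⟨c', h2.symm⟩

lemma prefix_split {α : Type*} {p u v : List α} (h : p <+: u ++ v) :
    p <+: u ∨ ∃ p', p' <+: v ∧ p = u ++ p' := by
  obtain ⟨b, hb⟩ := h
  rcases List.append_eq_append_iff.mp hb with ⟨a', h1, h2⟩ | ⟨c', h1, h2⟩
  · exact Or.inl ⟨a', h1.symm⟩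
  · exact Or.inr ⟨c', ⟨b, h2.symm⟩, h1⟩

lemma infix_split {x u v : List Bool} (h : x <:+: u ++ v) :
    x <:+: u ∨ x <:+: v ∨
      ∃ s p, s ≠ [] ∧ p ≠ [] ∧ s <:+ u ∧ p <+: v ∧ x = s ++ p := by
  obtain ⟨t, hxt, htuv⟩ := List.infix_iff_prefix_suffix.mp h
  rcases suffix_split htuv with htv | ⟨t', ht'u, rfl⟩
  · exact Or.inr (Or.inl (List.infix_iff_prefix_suffix.mpr ⟨t, hxt, htv⟩))
  · rcases prefix_split hxt with hxt' | ⟨p, hpv, rfl⟩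
    · exact Or.inl (List.infix_iff_prefix_suffix.mpr ⟨t', hxt', ht'u⟩)
    · rcases eq_or_ne t' [] with rfl | ht0
      · refine Or.inr (Or.inl ?_)
        simpa using hpv.isInfix
      · rcases eq_or_ne p [] with rfl | hp0
        · refine Or.inl ?_
          simpa using ht'u.isInfix
        · exact Or.inr (Or.inr ⟨t', p, ht0, hp0, ht'u, hpv, rfl⟩)

lemma fib_three_le {k : ℕ} (h : 2 ≤ Nat.fib k) : 3 ≤ k := by
  by_contra hc
  push_neg at hc
  interval_cases k <;> simp_all

lemma suf_reduce : ∀ m k, 1 ≤ k → k ≤ m → ∀ w ∈ wordSet m, ∀ s : List Bool,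
    s <:+ w → s.length < Nat.fib k → ∃ w₀ ∈ wordSet k, s <:+ w₀ := by
  intro m
  induction m using Nat.strong_induction_on with
  | _ m ih =>
    intro k hk1 hkm w hw s hsw hslen
    rcases eq_or_lt_of_le hkm with rfl | hlt
    · exact ⟨w, hw, hsw⟩
    rcases eq_or_ne s [] with rfl | hs0
    · obtain ⟨w₀, hw₀⟩ := wordSet_nonempty k hk1
      exact ⟨w₀, hw₀, List.nil_suffix⟩
    have hs1 : 1 ≤ s.length := List.length_pos_iff.mpr hs0
    have hk3 : 3 ≤ k := fib_three_le (by omega)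
    obtain ⟨m', rfl⟩ : ∃ m', m = m' + 3 := ⟨m - 3, by omega⟩
    rw [wordSet] at hw
    rcases hw with h | h <;> obtain ⟨u, hu, v, hv, rfl⟩ := h
    · -- u ∈ A_{m'+2}, v ∈ A_{m'+1}
      have hlv : v.length = Nat.fib (m'+1) := wordSet_length _ v hv
      rcases suffix_split hsw with hsv | ⟨s', hs'u, rfl⟩
      · by_cases hck : k ≤ m' + 1
        · exact ih (m'+1) (by omega) k hk1 hck v hv s hsv hslen
        · have hkeq : k = m' + 2 := by omega
          subst hkeq
          obtain ⟨m'', rfl⟩ : ∃ m'', m' = m'' + 1 := ⟨m' - 1, by omega⟩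
          obtain ⟨t, ht⟩ := wordSet_nonempty (m''+1) (by omega)
          exact ⟨t ++ v, append_mem_right ht hv, hsv.trans (List.suffix_append t v)⟩
      · rw [List.length_append, hlv] at hslen
        have hmono : Nat.fib k ≤ Nat.fib (m'+2) := Nat.fib_mono (by omega)
        have hkeq : k = m' + 2 := by
          by_contra hne
          have : Nat.fib k ≤ Nat.fib (m'+1) := Nat.fib_mono (by omega)
          omega
        subst hkeq
        obtain ⟨m'', rfl⟩ : ∃ m'', m' = m'' + 1 := ⟨m' - 1, by omega⟩
        rw [show Nat.fib (m''+1+1) = Nat.fib (m''+2) from rfl,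
          show Nat.fib (m''+1+2) = Nat.fib (m''+3) from rfl] at hslen
        have hfib : Nat.fib (m''+3) = Nat.fib (m''+1) + Nat.fib (m''+2) := Nat.fib_add_two
        obtain ⟨u₀, hu₀, hs'u₀⟩ := ih (m''+3) (by omega) (m''+1) (by omega) (by omega)
          u hu s' hs'u (by omega)
        obtain ⟨a, rfl⟩ := hs'u₀
        exact ⟨(a ++ s') ++ v, append_mem_right hu₀ hv, ⟨a, (List.append_assoc a s' v).symm⟩⟩
    · -- u ∈ A_{m'+1}, v ∈ A_{m'+2}
      rcases suffix_split hsw with hsv | ⟨s', hs'u, rfl⟩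
      · exact ih (m'+2) (by omega) k hk1 (by omega) v hv s hsv hslen
      · exfalso
        have hlv : v.length = Nat.fib (m'+2) := wordSet_length _ v hv
        have hmono : Nat.fib k ≤ Nat.fib (m'+2) := Nat.fib_mono (by omega)
        rw [List.length_append, hlv] at hslen
        omega

lemma pref_reduce : ∀ m k, 1 ≤ k → k ≤ m → ∀ w ∈ wordSet m, ∀ p : List Bool,
    p <+: w → p.length < Nat.fib k → ∃ w₀ ∈ wordSet k, p <+: w₀ := by
  intro m
  induction m using Nat.strong_induction_on with
  | _ m ih =>
    intro k hk1 hkm w hw p hpw hplen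
    rcases eq_or_lt_of_le hkm with rfl | hlt
    · exact ⟨w, hw, hpw⟩
    rcases eq_or_ne p [] with rfl | hp0
    · obtain ⟨w₀, hw₀⟩ := wordSet_nonempty k hk1
      exact ⟨w₀, hw₀, List.nil_prefix⟩
    have hp1 : 1 ≤ p.length := List.length_pos_iff.mpr hp0
    have hk3 : 3 ≤ k := fib_three_le (by omega)
    obtain ⟨m', rfl⟩ : ∃ m', m = m' + 3 := ⟨m - 3, by omega⟩
    rw [wordSet] at hw
    rcases hw with h | h <;> obtain ⟨u, hu, v, hv, rfl⟩ := h
    · -- u ∈ A_{m'+2}, v ∈ A_{m'+1}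
      rcases prefix_split hpw with hpu | ⟨p', hp'v, rfl⟩
      · exact ih (m'+2) (by omega) k hk1 (by omega) u hu p hpu hplen
      · exfalso
        have hlu : u.length = Nat.fib (m'+2) := wordSet_length _ u hu
        have hmono : Nat.fib k ≤ Nat.fib (m'+2) := Nat.fib_mono (by omega)
        rw [List.length_append, hlu] at hplen
        omega
    · -- u ∈ A_{m'+1}, v ∈ A_{m'+2}
      have hlu : u.length = Nat.fib (m'+1) := wordSet_length _ u hu
      rcases prefix_split hpw with hpu | ⟨p', hp'v, rfl⟩
      · by_cases hck : k ≤ m' + 1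
        · exact ih (m'+1) (by omega) k hk1 hck u hu p hpu hplen
        · have hkeq : k = m' + 2 := by omega
          subst hkeq
          obtain ⟨m'', rfl⟩ : ∃ m'', m' = m'' + 1 := ⟨m' - 1, by omega⟩
          obtain ⟨t, ht⟩ := wordSet_nonempty (m''+1) (by omega)
          exact ⟨u ++ t, append_mem_left hu ht, hpu.trans (List.prefix_append u t)⟩
      · rw [List.length_append, hlu] at hplen
        have hmono : Nat.fib k ≤ Nat.fib (m'+2) := Nat.fib_mono (by omega)
        have hkeq : k = m' + 2 := by
          by_contra hne
          have : Nat.fib k ≤ Nat.fib (m'+1) := Nat.fib_mono (by omega)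
          omega
        subst hkeq
        obtain ⟨m'', rfl⟩ : ∃ m'', m' = m'' + 1 := ⟨m' - 1, by omega⟩
        rw [show Nat.fib (m''+1+1) = Nat.fib (m''+2) from rfl,
          show Nat.fib (m''+1+2) = Nat.fib (m''+3) from rfl] at hplen
        have hfib : Nat.fib (m''+3) = Nat.fib (m''+1) + Nat.fib (m''+2) := Nat.fib_add_two
        obtain ⟨v₀, hv₀, hp'v₀⟩ := ih (m''+3) (by omega) (m''+1) (by omega) (by omega)
          v hv p' hp'v (by omega)
        obtain ⟨b, rfl⟩ := hp'v₀
        exact ⟨u ++ (p' ++ b), append_mem_left hu hv₀, ⟨b, List.append_assoc u p' b⟩⟩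

lemma main_lemma : ∀ m (n : ℕ), 4 ≤ n → ∀ w ∈ wordSet m, ∀ x : List Bool,
    x.length = Nat.fib n → x <:+: w → x ∈ factorSet (wordSet (n+1)) (Nat.fib n) := by
  intro m
  induction m using Nat.strong_induction_on with
  | _ m ih =>
    intro n hn w hw x hxlen hxw
    obtain ⟨n₂, rfl⟩ : ∃ n₂, n = n₂ + 4 := ⟨n - 4, by omega⟩
    rcases lt_trichotomy m (n₂ + 5) with hm | rfl | hm
    · -- m ≤ n
      have hwlen := wordSet_length m w hw
      have hxle : x.length ≤ w.length := hxw.length_le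
      have hmn : m = n₂ + 4 := by
        by_contra h
        have h1 : Nat.fib m ≤ Nat.fib (n₂ + 3) := Nat.fib_mono (by omega)
        have h2 : Nat.fib (n₂ + 3) < Nat.fib (n₂ + 4) := Nat.fib_lt_fib_succ (by omega)
        omega
      subst hmn
      have hxw' : x = w := hxw.eq_of_length (by omega)
      subst hxw'
      obtain ⟨b, hb⟩ := wordSet_nonempty (n₂ + 3) (by omega)
      exact ⟨hxlen, x ++ b, append_mem_left hw hb, ⟨[], b, by simp⟩⟩
    · exact ⟨hxlen, w, hw, hxw⟩
    · -- m ≥ n + 2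
      obtain ⟨m', rfl⟩ : ∃ m', m = m' + 3 := ⟨m - 3, by omega⟩
      have key : ∀ ju jv (u v : List Bool), n₂ + 4 ≤ ju → n₂ + 4 ≤ jv →
          ju < m' + 3 → jv < m' + 3 → u ∈ wordSet ju → v ∈ wordSet jv →
          x <:+: u ++ v → x ∈ factorSet (wordSet (n₂ + 5)) (Nat.fib (n₂ + 4)) := by
        intro ju jv u v hju hjv hju' hjv' hu hv hxuv
        rcases infix_split hxuv with hxu | hxv | ⟨s, p, hs0, hp0, hsu, hpv, rfl⟩
        · exact ih ju hju' (n₂ + 4) hn u hu x hxlen hxu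
        · exact ih jv hjv' (n₂ + 4) hn v hv x hxlen hxv
        · have hslen : 1 ≤ s.length := List.length_pos_iff.mpr hs0
          have hplen : 1 ≤ p.length := List.length_pos_iff.mpr hp0
          rw [List.length_append] at hxlen
          have hfib : Nat.fib (n₂ + 4) = Nat.fib (n₂ + 2) + Nat.fib (n₂ + 3) :=
            Nat.fib_add_two
          have hfiblt : Nat.fib (n₂ + 2) < Nat.fib (n₂ + 3) := Nat.fib_lt_fib_succ (by omega)
          have hfiblt2 : Nat.fib (n₂ + 3) < Nat.fib (n₂ + 4) := Nat.fib_lt_fib_succ (by omega)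
          by_cases hpcase : p.length < Nat.fib (n₂ + 3)
          · obtain ⟨u₀, hu₀, hsu₀⟩ :=
              suf_reduce ju (n₂ + 4) (by omega) hju u hu s hsu (by omega)
            obtain ⟨v₀, hv₀, hpv₀⟩ :=
              pref_reduce jv (n₂ + 3) (by omega) (by omega) v hv p hpv hpcase
            refine ⟨by rw [List.length_append]; omega, u₀ ++ v₀,
              append_mem_left hu₀ hv₀, ?_⟩
            obtain ⟨a, rfl⟩ := hsu₀
            obtain ⟨b, rfl⟩ := hpv₀
            exact ⟨a, b, by simp [List.append_assoc]⟩
          · obtain ⟨u₀, hu₀, hsu₀⟩ :=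
              suf_reduce ju (n₂ + 3) (by omega) (by omega) u hu s hsu (by omega)
            obtain ⟨v₀, hv₀, hpv₀⟩ :=
              pref_reduce jv (n₂ + 4) (by omega) hjv v hv p hpv (by omega)
            refine ⟨by rw [List.length_append]; omega, u₀ ++ v₀,
              append_mem_right hu₀ hv₀, ?_⟩
            obtain ⟨a, rfl⟩ := hsu₀
            obtain ⟨b, rfl⟩ := hpv₀
            exact ⟨a, b, by simp [List.append_assoc]⟩
      rw [wordSet] at hw
      rcases hw with h | h <;> obtain ⟨u, hu, v, hv, rfl⟩ := h
      · exact key (m'+2) (m'+1) u v (by omega) (by omega) (by omega) (by omega) hu hv hxw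
      · exact key (m'+1) (m'+2) u v (by omega) (by omega) (by omega) (by omega) hu hv hxw

theorem stmt12 (n : ℕ) (hn : 4 ≤ n) :
    Fn n = factorSet (wordSet (n + 1)) (Nat.fib n) := by
  ext x
  constructor
  · intro hx
    simp only [Fn, Set.mem_iUnion] at hx
    obtain ⟨m, _, hxlen, w, hw, hxw⟩ := hx
    exact main_lemma m n hn w hw x hxlen hxw
  · intro hx
    simp only [Fn, Set.mem_iUnion]
    exact ⟨n + 1, by omega, hx⟩
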